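/- Let n be a natural number and let j be a real number with 0 ≤ j < n. Then f_n^j(x) = Σ_{k=1}^{2^n} s_k · (x + k)^j is O(x^{j−n}) as x → ∞; that is, there exist constants C > 0 and X₀ such that |f_n^j(x)| ≤ C · x^{j−n} for all x ≥ X₀. Here s_k = (−1)^{ν(k−1)} and ν(m) denotes the number of ones in the binary expansion of m. -/

import Mathlib

/-- Thue–Morse sign: `s k = (-1)^(number of ones in binary expansion of k-1)`. -/
def tmSign (k : ℕ) : ℝ := (-1 : ℝ) ^ ((Nat.digits 2 (k - 1)).sum)

open Finset Set

private noncomputable def F (n : ℕ) (j : ℝ) (x : ℝ) : ℝ :=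
  ∑ k ∈ Finset.Icc 1 (2 ^ n), tmSign k * (x + k) ^ j

private lemma digitsum_step (r : ℕ) (hr : 0 < r) :
    (Nat.digits 2 r).sum = r % 2 + (Nat.digits 2 (r / 2)).sum := by
  rw [Nat.digits_def' (by norm_num : (1:ℕ) < 2) hr, List.sum_cons]

private lemma digitsum_add_pow : ∀ n : ℕ, ∀ r : ℕ, r < 2 ^ n →
    (Nat.digits 2 (r + 2 ^ n)).sum = (Nat.digits 2 r).sum + 1 := by
  intro n
  induction n with
  | zero =>
    intro r hr
    interval_cases r
    simp
  | succ n ih =>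
    intro r hr
    have h1 : (r + 2 ^ (n + 1)) % 2 = r % 2 := by omega
    have h2 : (r + 2 ^ (n + 1)) / 2 = r / 2 + 2 ^ n := by omega
    rw [digitsum_step _ (by positivity), h1, h2, ih _ (by omega)]
    rcases Nat.eq_zero_or_pos r with h | h
    · subst h; simp
    · rw [digitsum_step r h]; omega

private lemma tmSign_add_pow (n : ℕ) (m : ℕ) (hm1 : 1 ≤ m) (hm2 : m ≤ 2 ^ n) :
    tmSign (m + 2 ^ n) = - tmSign m := by
  unfold tmSign
  have : m + 2 ^ n - 1 = (m - 1) + 2 ^ n := by omega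
  rw [this, digitsum_add_pow n (m - 1) (by omega), pow_succ]
  ring

private lemma F_rec (n : ℕ) (j : ℝ) (x : ℝ) :
    F (n + 1) j x = F n j x - F n j (x + (2 ^ n : ℕ)) := by
  unfold F
  have hsplit : Finset.Icc 1 (2 ^ (n + 1)) =
      Finset.Icc 1 (2 ^ n) ∪ Finset.Icc (2 ^ n + 1) (2 ^ (n + 1)) := by
    ext k
    simp only [Finset.mem_union, Finset.mem_Icc]
    omega
  have hdisj : Disjoint (Finset.Icc 1 (2 ^ n)) (Finset.Icc (2 ^ n + 1) (2 ^ (n + 1))) := by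
    simp [Finset.disjoint_left, Finset.mem_Icc]; omega
  rw [hsplit, Finset.sum_union hdisj]
  have hmap : ∑ k ∈ Finset.Icc (2 ^ n + 1) (2 ^ (n + 1)), tmSign k * (x + k) ^ j
      = ∑ m ∈ Finset.Icc 1 (2 ^ n), tmSign (m + 2 ^ n) * (x + (m + 2 ^ n : ℕ)) ^ j := by
    rw [Finset.sum_nbij' (i := fun k => k - 2 ^ n) (j := fun m => m + 2 ^ n)]
    · intro a ha; simp only [Finset.mem_Icc] at *; omega
    · intro a ha; simp only [Finset.mem_Icc] at *; constructor <;> [omega; omega]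
    · intro a ha; simp only [Finset.mem_Icc] at ha; omega
    · intro a ha; omega
    · intro a ha
      simp only [Finset.mem_Icc] at ha
      have : a - 2 ^ n + 2 ^ n = a := by omega
      rw [this]
  rw [hmap, ← Finset.sum_add_distrib, ← Finset.sum_sub_distrib]
  refine Finset.sum_congr rfl fun m hm => ?_
  simp only [Finset.mem_Icc] at hm
  rw [tmSign_add_pow n m hm.1 hm.2]
  push_cast
  ring_nf

private lemma F_hasDerivAt (n : ℕ) (j : ℝ) (y : ℝ) (hy : 0 < y) :
    HasDerivAt (F n j) (j * F n (j - 1) y) y := by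
  have : HasDerivAt (F n j)
      (∑ k ∈ Finset.Icc 1 (2 ^ n), tmSign k * (1 * j * (y + k) ^ (j - 1))) y := by
    apply HasDerivAt.fun_sum
    intro k hk
    simp only [Finset.mem_Icc] at hk
    have hpos : y + (k : ℝ) ≠ 0 := by
      have : (1 : ℝ) ≤ (k : ℝ) := by exact_mod_cast hk.1
      nlinarith
    exact (((hasDerivAt_id y).add_const (k : ℝ)).rpow_const (Or.inl hpos)).const_mul _
  convert this using 1
  unfold F
  rw [Finset.mul_sum]
  refine Finset.sum_congr rfl fun k _ => by ring

private lemma key (n : ℕ) : ∀ j : ℝ, ∃ C : ℝ, 0 < C ∧ ∀ x : ℝ, 1 ≤ x →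
    |F n j x| ≤ C * x ^ (j - n) := by
  induction n with
  | zero =>
    intro j
    refine ⟨2 ^ |j|, by positivity, fun x hx => ?_⟩
    have hx0 : (0:ℝ) < x := by linarith
    have hF : F 0 j x = (x + 1) ^ j := by
      unfold F; simp [tmSign]
    rw [hF, Nat.cast_zero, sub_zero]
    rw [abs_of_nonneg (Real.rpow_nonneg (by linarith) j)]
    rcases le_or_gt 0 j with hj | hj
    · calc (x + 1) ^ j ≤ (2 * x) ^ j := by
            apply Real.rpow_le_rpow (by linarith) (by linarith) hj
        _ = 2 ^ j * x ^ j := Real.mul_rpow (by norm_num) hx0.le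
        _ ≤ 2 ^ |j| * x ^ j := by
            gcongr
            · exact one_le_two
            · exact le_abs_self j
    · calc (x + 1) ^ j ≤ x ^ j := by
            apply Real.rpow_le_rpow_of_nonpos hx0 (by linarith) hj.le
        _ ≤ 2 ^ |j| * x ^ j := by
            nlinarith [Real.one_le_rpow one_le_two (abs_nonneg j),
              Real.rpow_pos_of_pos hx0 j]
  | succ n ih =>
    intro j
    obtain ⟨C', hC', hb⟩ := ih (j - 1)
    set a : ℝ := ((2 ^ n : ℕ) : ℝ) with ha_def
    have ha : 0 < a := by positivity
    set e : ℝ := j - (n + 1 : ℕ) with he_def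
    set M : ℝ := max 1 ((1 + a) ^ e) with hM_def
    have hM1 : (1:ℝ) ≤ M := le_max_left _ _
    refine ⟨a * |j| * C' * M + 1, by positivity, fun x hx => ?_⟩
    have hx0 : (0:ℝ) < x := by linarith
    -- MVT
    obtain ⟨c, hc, hceq⟩ := exists_hasDerivAt_eq_slope (F n j) (fun y => j * F n (j - 1) y)
      (by linarith : x < x + a)
      (fun y hy => (F_hasDerivAt n j y (by simp only [Set.mem_Icc] at hy; linarith)).continuousAt.continuousWithinAt)
      (fun y hy => F_hasDerivAt n j y (by simp only [Set.mem_Ioo] at hy; linarith))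
    simp only [Set.mem_Ioo] at hc
    have hc1 : (1:ℝ) ≤ c := by linarith
    have hFeq : F (n + 1) j x = -(a * (j * F n (j - 1) c)) := by
      rw [F_rec n j x, ← ha_def]
      have := hceq
      rw [show x + a - x = a by ring, eq_div_iff ha.ne'] at this
      nlinarith [this]
    have hbound := hb c hc1
    have hxe : (0:ℝ) < x ^ e := Real.rpow_pos_of_pos hx0 e
    have hexp : c ^ ((j - 1) - n) ≤ M * x ^ e := by
      have hce : (j - 1) - (n:ℝ) = e := by push_cast [he_def]; ring
      rw [hce]
      rcases le_or_gt e 0 with he0 | he0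
      · calc c ^ e ≤ x ^ e := Real.rpow_le_rpow_of_nonpos hx0 hc.1.le he0
          _ ≤ M * x ^ e := by nlinarith [Real.rpow_pos_of_pos hx0 e]
      · have hca : c ≤ (1 + a) * x := by nlinarith
        calc c ^ e ≤ ((1 + a) * x) ^ e :=
              Real.rpow_le_rpow (by linarith) hca he0.le
          _ = (1 + a) ^ e * x ^ e := Real.mul_rpow (by linarith) hx0.le
          _ ≤ M * x ^ e :=
              mul_le_mul_of_nonneg_right (le_max_right _ _) hxe.le
    calc |F (n + 1) j x| = a * (|j| * |F n (j - 1) c|) := by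
          rw [hFeq, abs_neg, abs_mul, abs_mul, abs_of_pos ha]
      _ ≤ a * (|j| * (C' * c ^ ((j - 1) - n))) := by
          have := abs_nonneg (F n (j - 1) c)
          gcongr
      _ ≤ a * (|j| * (C' * (M * x ^ e))) := by
          have : (0:ℝ) ≤ c ^ ((j - 1) - (n:ℝ)) := (Real.rpow_pos_of_pos (by linarith) _).le
          gcongr
      _ = a * |j| * C' * M * x ^ e := by ring
      _ ≤ (a * |j| * C' * M + 1) * x ^ e := by nlinarith
      _ = (a * |j| * C' * M + 1) * x ^ (j - (n + 1 : ℕ)) := by rw [he_def]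

theorem stmt4 (n : ℕ) (j : ℝ) (hj0 : 0 ≤ j) (hjn : j < n) :
    ∃ C : ℝ, 0 < C ∧ ∃ X₀ : ℝ, ∀ x : ℝ, X₀ ≤ x →
      |∑ k ∈ Finset.Icc 1 (2 ^ n), tmSign k * (x + k) ^ j| ≤ C * x ^ (j - n) := by
  obtain ⟨C, hC, hb⟩ := key n j
  exact ⟨C, hC, 1, fun x hx => hb x hx⟩
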